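/- Let R > 0, κ ≥ 0, λ ∈ ℝ, and let h : [0,R] → ℝ be C¹ on [0,R] and C² on (0,R], not identically zero, with h(0) = 0, satisfying −h″(r) − (2/r)h′(r) + (2/r²)h(r) = λ·h(r) for all r ∈ (0,R], and the boundary condition h′(R) = −κ·h(R). Then λ > 0. -/

import Mathlib

open Real Set

/-- Positivity of the leading-order operator `H₀ = −d²/dr² − (2/r)d/dr + 2/r²`
with Dirichlet condition at the center and nonpositive-Robin condition at the
surface: any nontrivial eigenfunction has a positive eigenvalue. -/
theorem stmt15 (R κ lam : ℝ) (hR : 0 < R) (hκ : 0 ≤ κ) (h : ℝ → ℝ)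
    (hC1 : (∀ r ∈ Icc (0:ℝ) R, DifferentiableAt ℝ h r) ∧
      ContinuousOn (deriv h) (Icc 0 R))
    (hC2 : (∀ r ∈ Ioc (0:ℝ) R, DifferentiableAt ℝ (deriv h) r) ∧
      ContinuousOn (deriv (deriv h)) (Ioc 0 R))
    (hne : ∃ r ∈ Icc (0:ℝ) R, h r ≠ 0) (h0 : h 0 = 0)
    (hode : ∀ r ∈ Ioc (0:ℝ) R,
      -deriv (deriv h) r - 2 / r * deriv h r + 2 / r ^ 2 * h r = lam * h r)
    (hbc : deriv h R = -κ * h R) :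
    0 < lam := by
  by_contra hlam
  push_neg at hlam
  obtain ⟨hdiff, hcontd⟩ := hC1
  obtain ⟨hdiff2, _⟩ := hC2
  set F : ℝ → ℝ := fun r => r ^ 2 * h r * deriv h r with hFdef
  have hhcont : ContinuousOn h (Icc 0 R) :=
    fun r hr => (hdiff r hr).continuousAt.continuousWithinAt
  have hFcont : ContinuousOn F (Icc 0 R) :=
    (((continuous_pow 2).continuousOn).mul hhcont).mul hcontd
  have key : ∀ r ∈ Ioo (0:ℝ) R,
      HasDerivAt F (r ^ 2 * (deriv h r) ^ 2 + (2 - lam * r ^ 2) * (h r) ^ 2) r := by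
    intro r hr
    have hr0 : (0:ℝ) < r := hr.1
    have hrne : r ≠ 0 := ne_of_gt hr0
    have hrIcc : r ∈ Icc (0:ℝ) R := ⟨le_of_lt hr.1, le_of_lt hr.2⟩
    have hrIoc : r ∈ Ioc (0:ℝ) R := ⟨hr.1, le_of_lt hr.2⟩
    have hd := (hdiff r hrIcc).hasDerivAt
    have hdd := (hdiff2 r hrIoc).hasDerivAt
    have h2 : HasDerivAt (fun x : ℝ => x ^ 2 * h x)
        ((2 * r) * h r + r ^ 2 * deriv h r) r := by
      have := (hasDerivAt_pow 2 r).fun_mul hd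
      simpa [pow_one] using this
    have hFd : HasDerivAt F ((2 * r * h r + r ^ 2 * deriv h r) * deriv h r + r ^ 2 * h r * deriv (deriv h) r) r := h2.fun_mul hdd
    have hode' := hode r hrIoc
    have hdd_eq : deriv (deriv h) r
        = -(2 / r) * deriv h r + (2 / r ^ 2) * h r - lam * h r := by linarith
    convert hFd using 1
    rw [hdd_eq]
    field_simp
    ring
  have hmono : MonotoneOn F (Icc 0 R) := by
    apply monotoneOn_of_deriv_nonneg (convex_Icc 0 R) hFcont
    · intro x hx
      rw [interior_Icc] at hx
      exact (key x hx).differentiableAt.differentiableWithinAt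
    · intro x hx
      rw [interior_Icc] at hx
      rw [(key x hx).deriv]
      have h1 : (0:ℝ) ≤ 2 - lam * x ^ 2 := by nlinarith [sq_nonneg x, hx.1.le]
      have h2 : (0:ℝ) ≤ x ^ 2 * (deriv h x) ^ 2 := by positivity
      nlinarith [sq_nonneg (h x)]
  have hF0 : F 0 = 0 := by simp [hFdef, h0]
  have hFR : F R ≤ 0 := by
    have : F R = -(κ * (R ^ 2 * (h R) ^ 2)) := by
      simp only [hFdef, hbc]; ring
    rw [this]
    have : (0:ℝ) ≤ κ * (R ^ 2 * (h R) ^ 2) := by positivity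
    linarith
  have hFzero : ∀ x ∈ Icc (0:ℝ) R, F x = 0 := by
    intro x hx
    have h1 : F 0 ≤ F x := hmono (left_mem_Icc.2 hR.le) hx hx.1
    have h2 : F x ≤ F R := hmono hx (right_mem_Icc.2 hR.le) hx.2
    linarith
  have hprod : ∀ x ∈ Icc (0:ℝ) R, h x * deriv h x = 0 := by
    intro x hx
    rcases eq_or_lt_of_le hx.1 with h' | h'
    · rw [← h', h0, zero_mul]
    · have hx2 : x ^ 2 ≠ 0 := pow_ne_zero _ (ne_of_gt h')
      have := hFzero x hx
      simp only [hFdef] at this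
      rcases mul_eq_zero.1 this with h'' | h''
      · rcases mul_eq_zero.1 h'' with h3 | h3
        · exact absurd h3 hx2
        · rw [h3, zero_mul]
      · rw [h'', mul_zero]
  have hGdiff : DifferentiableOn ℝ (fun x => h x ^ 2) (Icc 0 R) :=
    fun x hx => ((hdiff x hx).pow 2).differentiableWithinAt
  have hGzero : ∀ x ∈ Ico (0:ℝ) R, derivWithin (fun x => h x ^ 2) (Icc 0 R) x = 0 := by
    intro x hx
    have hxIcc : x ∈ Icc (0:ℝ) R := ⟨hx.1, hx.2.le⟩
    have hda : DifferentiableAt ℝ (fun x => h x ^ 2) x := (hdiff x hxIcc).pow 2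
    rw [hda.derivWithin ((uniqueDiffOn_Icc hR) x hxIcc)]
    have hder : deriv (fun x => h x ^ 2) x = 2 * (h x * deriv h x) := by
      have := ((hdiff x hxIcc).hasDerivAt.fun_pow 2).deriv
      simpa [pow_one, mul_assoc] using this
    rw [hder, hprod x hxIcc, mul_zero]
  have hconst := constant_of_derivWithin_zero hGdiff hGzero
  obtain ⟨r, hr, hrne⟩ := hne
  have hr2 := hconst r hr
  rw [h0] at hr2
  simp at hr2
  exact hrne (by simpa using hr2)
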